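/- For all integers m, n ≥ 0, gcd(13^m − 302^n, 3·5·7·17) > 1; indeed 7 divides 13^m − 302^n when m ≡ 0 (mod 2), 3 divides it when n ≡ 0 (mod 2), 17 divides it when m ≡ n (mod 4), and 5 divides it when m ≡ −n (mod 4). -/

import Mathlib

lemma cast_dvd_sub_pow (p : ℕ) [NeZero p] (m n : ℕ) :
    ((13 : ZMod p)) ^ m = ((302 : ZMod p)) ^ n →
    (p : ℤ) ∣ (13 : ℤ) ^ m - (302 : ℤ) ^ n := by
  intro h
  have := (ZMod.intCast_zmod_eq_zero_iff_dvd ((13 : ℤ) ^ m - (302 : ℤ) ^ n) p).mp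
  apply this
  push_cast
  rw [h]
  ring

lemma div7 (m n : ℕ) (hm : 2 ∣ m) : (7 : ℤ) ∣ (13 : ℤ) ^ m - (302 : ℤ) ^ n := by
  apply cast_dvd_sub_pow
  have h1 : (13 : ZMod 7) ^ m = (13 : ZMod 7) ^ (m % 2) := pow_eq_pow_mod m (by decide)
  have h2 : (302 : ZMod 7) ^ n = (302 : ZMod 7) ^ (n % 1) := pow_eq_pow_mod n (by decide)
  have hm2 : m % 2 = 0 := by omega
  rw [h1, h2, Nat.mod_one, hm2]; decide

lemma div3 (m n : ℕ) (hn : 2 ∣ n) : (3 : ℤ) ∣ (13 : ℤ) ^ m - (302 : ℤ) ^ n := by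
  apply cast_dvd_sub_pow
  have h1 : (13 : ZMod 3) ^ m = (13 : ZMod 3) ^ (m % 1) := pow_eq_pow_mod m (by decide)
  have h2 : (302 : ZMod 3) ^ n = (302 : ZMod 3) ^ (n % 2) := pow_eq_pow_mod n (by decide)
  rw [h1, h2, Nat.mod_one]
  have hn2 : n % 2 = 0 := by omega
  rw [hn2]; decide

lemma div17 (m n : ℕ) (h : m ≡ n [MOD 4]) : (17 : ℤ) ∣ (13 : ℤ) ^ m - (302 : ℤ) ^ n := by
  apply cast_dvd_sub_pow
  have h1 : (13 : ZMod 17) ^ m = (13 : ZMod 17) ^ (m % 4) := pow_eq_pow_mod m (by decide)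
  have h2 : (302 : ZMod 17) ^ n = (302 : ZMod 17) ^ (n % 4) := pow_eq_pow_mod n (by decide)
  have h3 : (302 : ZMod 17) = 13 := by decide
  rw [h1, h2, h3, h]

lemma div5 (m n : ℕ) (h : 4 ∣ m + n) : (5 : ℤ) ∣ (13 : ℤ) ^ m - (302 : ℤ) ^ n := by
  apply cast_dvd_sub_pow
  have h1 : (13 : ZMod 5) ^ m = (13 : ZMod 5) ^ (m % 4) := pow_eq_pow_mod m (by decide)
  have h2 : (302 : ZMod 5) ^ n = (302 : ZMod 5) ^ (n % 4) := pow_eq_pow_mod n (by decide)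
  have h3 : m % 4 = (3 * n) % 4 := by omega
  have h4 : (302 : ZMod 5) ^ (n % 4) = (13 : ZMod 5) ^ ((3 * n) % 4) := by
    have : (3 * n) % 4 = (3 * (n % 4)) % 4 := by omega
    rw [this]
    have h5 : n % 4 = 0 ∨ n % 4 = 1 ∨ n % 4 = 2 ∨ n % 4 = 3 := by omega
    rcases h5 with h5 | h5 | h5 | h5 <;> rw [h5] <;> decide
  rw [h1, h2, h3, h4]

theorem covering_example_13_302 :
    ∀ m n : ℕ,
      1 < Int.gcd ((13 : ℤ) ^ m - (302 : ℤ) ^ n) (3 * 5 * 7 * 17) ∧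
      (2 ∣ m → (7 : ℤ) ∣ (13 : ℤ) ^ m - (302 : ℤ) ^ n) ∧
      (2 ∣ n → (3 : ℤ) ∣ (13 : ℤ) ^ m - (302 : ℤ) ^ n) ∧
      (m ≡ n [MOD 4] → (17 : ℤ) ∣ (13 : ℤ) ^ m - (302 : ℤ) ^ n) ∧
      (4 ∣ m + n → (5 : ℤ) ∣ (13 : ℤ) ^ m - (302 : ℤ) ^ n) := by
  intro m n
  refine ⟨?_, div7 m n, div3 m n, div17 m n, div5 m n⟩
  have key : ∃ p : ℕ, 1 < p ∧ (p : ℤ) ∣ (13 : ℤ) ^ m - (302 : ℤ) ^ n ∧ (p : ℤ) ∣ 3 * 5 * 7 * 17 := by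
    rcases Nat.even_or_odd m with hm | hm
    · exact ⟨7, by norm_num, div7 m n hm.two_dvd, by norm_num⟩
    rcases Nat.even_or_odd n with hn | hn
    · exact ⟨3, by norm_num, div3 m n hn.two_dvd, by norm_num⟩
    by_cases h : m % 4 = n % 4
    · exact ⟨17, by norm_num, div17 m n h, by norm_num⟩
    · refine ⟨5, by norm_num, div5 m n ?_, by norm_num⟩
      rcases hm with ⟨a, ha⟩
      rcases hn with ⟨b, hb⟩
      omega
  obtain ⟨p, hp, h1, h2⟩ := key
  have hd : (p : ℤ) ∣ (Int.gcd ((13 : ℤ) ^ m - (302 : ℤ) ^ n) (3 * 5 * 7 * 17) : ℤ) :=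
    Int.dvd_coe_gcd h1 h2
  have hdn : p ∣ Int.gcd ((13 : ℤ) ^ m - (302 : ℤ) ^ n) (3 * 5 * 7 * 17) := by
    exact_mod_cast hd
  have hpos : 0 < Int.gcd ((13 : ℤ) ^ m - (302 : ℤ) ^ n) (3 * 5 * 7 * 17) :=
    Int.gcd_pos_of_ne_zero_right _ (by norm_num)
  exact lt_of_lt_of_le hp (Nat.le_of_dvd hpos hdn)
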